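/- arXiv:2502.15476 — 3 statements merged into one kernel-verified Lean document; each statement's English description precedes it below -/
import Mathlib

section
/- Let S be a finite poset, let X_S be the topological space on S with the Alexandrov topology, and let V be a complete category. Then the category of functors S ⥤ V is equivalent to the category of V-valued sheaves on X_S. The equivalence sends a functor D to the sheaf assigning to each open set U the limit of the restriction of D to U, and sends a sheaf F to the functor of stalks s ↦ F(U_s), where U_s = {t ∈ S : t ≥ s} is the minimal open neighborhood of s. -/
open CategoryTheory CategoryTheory.Limits TopologicalSpace Opposite

universe u v

/-- The Alexandrov topology of a preorder: the open sets are exactly the upper sets. -/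
def alexandrovTopology (S : Type) [Preorder S] : TopologicalSpace S where
  IsOpen U := IsUpperSet U
  isOpen_univ := isUpperSet_univ
  isOpen_inter _ _ := IsUpperSet.inter
  isOpen_sUnion _ h := isUpperSet_sUnion h

/-- The topological space `X_S` associated with a poset `S`. -/
def alexandrovSpace (S : Type) [Preorder S] : TopCat :=
  @TopCat.of S (alexandrovTopology S)

variable (S : Type) [PartialOrder S]

/-- An open set of `X_S`, regarded as a subposet of `S`. -/
def openSubposet (U : Opens (alexandrovSpace S)) : Type := {t : S // t ∈ U.1}

instance (U : Opens (alexandrovSpace S)) : PartialOrder (openSubposet S U) :=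
  Subtype.partialOrder _

/-- The restriction of a diagram `D : S ⥤ V` to an open subset `U` of `X_S`. -/
def restrictDiagram {V : Type u} [Category.{v} V] (D : S ⥤ V)
    (U : Opens (alexandrovSpace S)) : openSubposet S U ⥤ V :=
  (Monotone.functor (f := fun t : openSubposet S U => (t.1 : S)) fun _ _ h => h) ⋙ D

/-- The minimal open neighbourhood `U_s = {t | s ≤ t}` of a point `s` of `X_S`. -/
def minimalOpen (s : S) : Opens (alexandrovSpace S) :=
  ⟨{t : S | s ≤ t}, fun _ _ hab ha => le_trans ha hab⟩

/-! ### Auxiliary constructions -/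

namespace AlexEquivAux

/-- Open sets in the Alexandrov space are upper sets. -/
lemma upper {U : Opens (alexandrovSpace S)} {a b : S} (h : a ≤ b) (ha : a ∈ U) : b ∈ U :=
  U.2 h ha

lemma minimalOpen_le {U : Opens (alexandrovSpace S)} {r : S} (hr : r ∈ U) :
    minimalOpen S r ≤ U := fun _ ht => upper S ht hr

lemma mem_minimalOpen {r t : S} : t ∈ minimalOpen S r ↔ r ≤ t := Iff.rfl

/-- Parallel morphisms in `(Opens X)ᵒᵖ` are equal. -/
lemma hom_eq {a b : (Opens (alexandrovSpace S))ᵒᵖ} (f g : a ⟶ b) : f = g :=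
  Quiver.Hom.unop_inj (Subsingleton.elim _ _)

variable {V : Type u} [Category.{v} V] [HasLimitsOfSize.{0, 0} V]

/-- The projection from the limit over an open set to the value at a point. -/
noncomputable abbrev proj (D : S ⥤ V) (U : Opens (alexandrovSpace S)) {t : S} (ht : t ∈ U) :
    limit (restrictDiagram S D U) ⟶ D.obj t :=
  limit.π (restrictDiagram S D U) ⟨t, ht⟩

lemma proj_w (D : S ⥤ V) (U : Opens (alexandrovSpace S)) {t t' : S} (ht : t ∈ U)
    (h : t ≤ t') :
    proj S D U ht ≫ D.map (homOfLE h) = proj S D U (upper S h ht) :=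
  limit.w (restrictDiagram S D U)
    (homOfLE h : (⟨t, ht⟩ : openSubposet S U) ⟶ ⟨t', upper S h ht⟩)

/-- The presheaf `U ↦ lim (D|_U)`. -/
noncomputable def limPresheaf (D : S ⥤ V) : TopCat.Presheaf V (alexandrovSpace S) where
  obj U := limit (restrictDiagram S D U.unop)
  map {U U'} f := limit.lift (restrictDiagram S D U'.unop)
    { pt := limit (restrictDiagram S D U.unop)
      π :=
        { app := fun t => proj S D U.unop (f.unop.le t.2)
          naturality := by
            intro a b g
            dsimp
            erw [Category.id_comp]
            exact (proj_w S D U.unop (f.unop.le a.2) g.le).symm } }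
  map_id U := by
    apply limit.hom_ext
    intro t
    simp only [limit.lift_π, Category.id_comp]
    rfl
  map_comp {U U' U''} f g := by
    apply limit.hom_ext
    intro t
    simp [proj]
    erw [limit.lift_π]
    rfl

@[simp] lemma limPresheaf_map_proj (D : S ⥤ V) {U U' : (Opens (alexandrovSpace S))ᵒᵖ}
    (f : U ⟶ U') {t : S} (ht : t ∈ U'.unop) :
    (limPresheaf S D).map f ≫ proj S D U'.unop ht = proj S D U.unop (f.unop.le ht) :=
  limit.lift_π _ _

section SheafCondition

variable (D : S ⥤ V) {ι : Type} (U : ι → Opens (alexandrovSpace S))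

lemma mem_inf {t : S} {A B : Opens (alexandrovSpace S)} (hA : t ∈ A) (hB : t ∈ B) :
    t ∈ A ⊓ B := ⟨hA, hB⟩

lemma pair_single_proj (c : Cone ((Pairwise.diagram U).op ⋙ limPresheaf S D)) (i j : ι)
    {t : S} (hi : t ∈ U i) (hj : t ∈ U j) :
    c.π.app (op (Pairwise.pair i j)) ≫ proj S D (U i ⊓ U j) (mem_inf S hi hj)
      = c.π.app (op (Pairwise.single i)) ≫ proj S D (U i) hi := by
  have f : Pairwise.pair i j ⟶ Pairwise.single i := Pairwise.Hom.left i j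
  erw [← c.w f.op, Category.assoc]
  exact congrArg (c.π.app (op (Pairwise.single i)) ≫ ·)
    (limPresheaf_map_proj S D ((Pairwise.diagram U).map f).op (mem_inf S hi hj))

lemma pair_single_proj' (c : Cone ((Pairwise.diagram U).op ⋙ limPresheaf S D)) (i j : ι)
    {t : S} (hi : t ∈ U i) (hj : t ∈ U j) :
    c.π.app (op (Pairwise.pair i j)) ≫ proj S D (U i ⊓ U j) (mem_inf S hi hj)
      = c.π.app (op (Pairwise.single j)) ≫ proj S D (U j) hj := by
  have f : Pairwise.pair i j ⟶ Pairwise.single j := Pairwise.Hom.right i j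
  erw [← c.w f.op, Category.assoc]
  exact congrArg (c.π.app (op (Pairwise.single j)) ≫ ·)
    (limPresheaf_map_proj S D ((Pairwise.diagram U).map f).op (mem_inf S hi hj))

lemma single_single (c : Cone ((Pairwise.diagram U).op ⋙ limPresheaf S D)) {i j : ι}
    {t : S} (hi : t ∈ U i) (hj : t ∈ U j) :
    c.π.app (op (Pairwise.single i)) ≫ proj S D (U i) hi
      = c.π.app (op (Pairwise.single j)) ≫ proj S D (U j) hj := by
  rw [← pair_single_proj S D U c i j hi hj, pair_single_proj' S D U c i j hi hj]

lemma exi {t : S} (ht : t ∈ (iSup U : Opens (alexandrovSpace S))) : ∃ i, t ∈ U i :=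
  (@Opens.mem_iSup _ (alexandrovSpace S).str ι t U).mp ht

lemma mem_iSup_of {t : S} {i : ι} (ht : t ∈ U i) :
    t ∈ (iSup U : Opens (alexandrovSpace S)) :=
  (@Opens.mem_iSup _ (alexandrovSpace S).str ι t U).mpr ⟨i, ht⟩

noncomputable def idx {t : S} (ht : t ∈ (iSup U : Opens (alexandrovSpace S))) : ι :=
  (exi S U ht).choose

lemma idx_spec {t : S} (ht : t ∈ (iSup U : Opens (alexandrovSpace S))) : t ∈ U (idx S U ht) :=
  (exi S U ht).choose_spec

/-- The cone used to construct the lift in the sheaf condition. -/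
noncomputable def liftCone (c : Cone ((Pairwise.diagram U).op ⋙ limPresheaf S D)) :
    Cone (restrictDiagram S D (iSup U)) where
  pt := c.pt
  π :=
    { app := fun t =>
        c.π.app (op (Pairwise.single (idx S U t.2))) ≫ proj S D _ (idx_spec S U t.2)
      naturality := by
        intro a b g
        dsimp
        erw [Category.id_comp, Category.assoc]
        rw [show (restrictDiagram S D (iSup U)).map g = D.map (homOfLE g.le) from rfl]
        erw [proj_w S D _ _ g.le]
        exact (single_single S D U c (upper S g.le (idx_spec S U a.2)) (idx_spec S U b.2)).symm }

/-- The presheaf of limits satisfies the sheaf condition. -/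
noncomputable def limSheafIsLimit :
    IsLimit ((limPresheaf S D).mapCone (Pairwise.cocone U).op) where
  lift c := limit.lift (restrictDiagram S D (iSup U)) (liftCone S D U c)
  fac c j := by
    induction j using Opposite.rec with
    | op j =>
      cases j with
      | single i =>
        refine limit.hom_ext fun t => ?_
        show (limit.lift _ (liftCone S D U c) ≫
            (limPresheaf S D).map ((Pairwise.cocone U).ι.app (Pairwise.single i)).op)
            ≫ proj S D (U i) t.2
          = c.π.app (op (Pairwise.single i)) ≫ proj S D (U i) t.2
        erw [Category.assoc,
          limPresheaf_map_proj S D (show op (iSup U) ⟶ op (U i) from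
            ((Pairwise.cocone U).ι.app (Pairwise.single i)).op) t.2,
          limit.lift_π]
        exact single_single S D U c _ t.2
      | pair i j =>
        refine limit.hom_ext fun t => ?_
        have hi : t.1 ∈ U i := t.2.1
        have hj : t.1 ∈ U j := t.2.2
        show (limit.lift _ (liftCone S D U c) ≫
            (limPresheaf S D).map ((Pairwise.cocone U).ι.app (Pairwise.pair i j)).op)
            ≫ proj S D (U i ⊓ U j) (mem_inf S hi hj)
          = c.π.app (op (Pairwise.pair i j)) ≫ proj S D (U i ⊓ U j) (mem_inf S hi hj)
        erw [Category.assoc,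
          limPresheaf_map_proj S D (show op (iSup U) ⟶ op (U i ⊓ U j) from
            ((Pairwise.cocone U).ι.app (Pairwise.pair i j)).op) (mem_inf S hi hj),
          limit.lift_π, pair_single_proj S D U c i j hi hj]
        exact single_single S D U c _ hi
  uniq c m hm := by
    refine limit.hom_ext (F := restrictDiagram S D (iSup U)) fun t => ?_
    show m ≫ proj S D (iSup U) t.2
      = limit.lift _ (liftCone S D U c) ≫ proj S D (iSup U) t.2
    erw [limit.lift_π]
    have hA : (limPresheaf S D).map
          ((Pairwise.cocone U).ι.app (Pairwise.single (idx S U t.2))).op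
          ≫ proj S D (U (idx S U t.2)) (idx_spec S U t.2)
        = proj S D (iSup U) t.2 :=
      limPresheaf_map_proj S D _ _
    have hm' : m ≫ (limPresheaf S D).map
          ((Pairwise.cocone U).ι.app (Pairwise.single (idx S U t.2))).op
        = c.π.app (op (Pairwise.single (idx S U t.2))) :=
      hm (op (Pairwise.single (idx S U t.2)))
    erw [← hA, ← Category.assoc, hm']
    rfl

theorem limPresheaf_isSheaf : (limPresheaf S D).IsSheaf := by
  rw [TopCat.Presheaf.isSheaf_iff_isSheafPairwiseIntersections]
  intro ι U
  exact ⟨limSheafIsLimit S D U⟩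

end SheafCondition

section Stalks

/-- The functor `s ↦ op U_s`. -/
def mOp : S ⥤ (Opens (alexandrovSpace S))ᵒᵖ where
  obj s := op (minimalOpen S s)
  map {s t} f := (homOfLE (fun r hr => le_trans f.le hr) :
    minimalOpen S t ⟶ minimalOpen S s).op
  map_id _ := hom_eq S _ _
  map_comp _ _ := hom_eq S _ _

variable (F : TopCat.Sheaf V (alexandrovSpace S))

lemma map_eq {a b : (Opens (alexandrovSpace S))ᵒᵖ} (f g : a ⟶ b) :
    F.val.map f = F.val.map g := congrArg _ (hom_eq S f g)

/-- The cover of an open set by the minimal opens of its points. -/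
def ptCover (W : Opens (alexandrovSpace S)) : openSubposet S W → Opens (alexandrovSpace S) :=
  fun r => minimalOpen S r.1

lemma iSup_ptCover (W : Opens (alexandrovSpace S)) :
    (iSup (ptCover S W) : Opens (alexandrovSpace S)) = W := by
  apply le_antisymm
  · exact iSup_le fun r => minimalOpen_le S r.2
  · intro t ht
    exact mem_iSup_of S (ptCover S W) (i := ⟨t, ht⟩) (le_refl (α := S) t)

/-- Separatedness: maps into `F(W)` agree if they agree on all minimal opens. -/
lemma sheaf_sep (W : Opens (alexandrovSpace S)) {A : V}
    (x y : A ⟶ F.val.obj (op W))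
    (h : ∀ (r : S) (hr : r ∈ W),
      x ≫ F.val.map (homOfLE (minimalOpen_le S hr)).op
        = y ≫ F.val.map (homOfLE (minimalOpen_le S hr)).op) : x = y := by
  obtain ⟨hL⟩ := (TopCat.Presheaf.isSheaf_iff_isSheafPairwiseIntersections F.val).mp F.cond
    (ptCover S W)
  have hiso : IsIso (F.val.map (eqToHom (congrArg op (iSup_ptCover S W).symm))) :=
    inferInstance
  refine (cancel_mono (F.val.map (eqToHom (congrArg op (iSup_ptCover S W).symm)))).mp ?_
  apply hL.hom_ext
  intro j
  induction j using Opposite.rec with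
  | op j =>
    cases j with
    | single r =>
      show (x ≫ F.val.map (eqToHom (congrArg op (iSup_ptCover S W).symm)))
          ≫ F.val.map ((Pairwise.cocone (ptCover S W)).ι.app (Pairwise.single r)).op
        = (y ≫ F.val.map (eqToHom (congrArg op (iSup_ptCover S W).symm)))
          ≫ F.val.map ((Pairwise.cocone (ptCover S W)).ι.app (Pairwise.single r)).op
      erw [Category.assoc, Category.assoc, ← F.val.map_comp,
        map_eq S F (eqToHom (congrArg op (iSup_ptCover S W).symm) ≫
            ((Pairwise.cocone (ptCover S W)).ι.app (Pairwise.single r)).op)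
          ((homOfLE (minimalOpen_le S r.2)).op)]
      exact h r.1 r.2
    | pair r r' =>
      show (x ≫ F.val.map (eqToHom (congrArg op (iSup_ptCover S W).symm)))
          ≫ F.val.map ((Pairwise.cocone (ptCover S W)).ι.app (Pairwise.pair r r')).op
        = (y ≫ F.val.map (eqToHom (congrArg op (iSup_ptCover S W).symm)))
          ≫ F.val.map ((Pairwise.cocone (ptCover S W)).ι.app (Pairwise.pair r r')).op
      erw [Category.assoc, Category.assoc, ← F.val.map_comp,
        map_eq S F (eqToHom (congrArg op (iSup_ptCover S W).symm) ≫
            ((Pairwise.cocone (ptCover S W)).ι.app (Pairwise.pair r r')).op)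
          ((homOfLE (minimalOpen_le S r.2)).op ≫
            (homOfLE (inf_le_left : ptCover S W r ⊓ ptCover S W r' ≤ ptCover S W r)).op),
        F.val.map_comp, ← Category.assoc, h r.1 r.2, Category.assoc]

/-- The cone over the restriction to `U` of the stalk diagram of `F`, with apex `F(U)`. -/
def stalkCone (U : Opens (alexandrovSpace S)) :
    Cone (restrictDiagram S (mOp S ⋙ F.val) U) where
  pt := F.val.obj (op U)
  π :=
    { app := fun t => F.val.map (homOfLE (minimalOpen_le S t.2)).op
      naturality := by
        intro a b g
        show 𝟙 (F.val.obj (op U)) ≫ F.val.map (homOfLE (minimalOpen_le S b.2)).op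
          = F.val.map (homOfLE (minimalOpen_le S a.2)).op ≫
            F.val.map ((homOfLE (fun r hr => le_trans (leOfHom g) hr) :
              minimalOpen S b.1 ⟶ minimalOpen S a.1)).op
        rw [Category.id_comp, ← F.val.map_comp]
        exact map_eq S F _ _ }

lemma cone_w (U : Opens (alexandrovSpace S))
    (c : Cone (restrictDiagram S (mOp S ⋙ F.val) U)) {a : openSubposet S U}
    {r : S} (har : a.1 ≤ r) :
    c.π.app a ≫ F.val.map ((homOfLE (fun q hq => le_trans har hq) :
        minimalOpen S r ⟶ minimalOpen S a.1)).op
      = c.π.app ⟨r, upper S har a.2⟩ := by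
  have h := c.w (homOfLE har : a ⟶ ⟨r, upper S har a.2⟩)
  rw [← h]
  exact congrArg (c.π.app a ≫ ·) (map_eq S F _ _)

lemma leg_res' (U : Opens (alexandrovSpace S))
    (c : Cone (restrictDiagram S (mOp S ⋙ F.val) U)) (t : openSubposet S U)
    {r : S} (hr : r ∈ minimalOpen S t.1) :
    c.π.app t ≫ F.val.map (homOfLE (minimalOpen_le S hr)).op
      = c.π.app ⟨r, upper S hr t.2⟩ := by
  erw [map_eq S F ((homOfLE (minimalOpen_le S hr)).op)
    ((homOfLE (fun q hq => le_trans hr hq) : minimalOpen S r ⟶ minimalOpen S t.1)).op]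
  exact cone_w S F U c hr

lemma leg_res (U : Opens (alexandrovSpace S))
    (c : Cone (restrictDiagram S (mOp S ⋙ F.val) U)) (t : openSubposet S U)
    {W : Opens (alexandrovSpace S)} (g : op (minimalOpen S t.1) ⟶ op W)
    {r : S} (hr : r ∈ W) (htr : t.1 ≤ r) :
    (c.π.app t ≫ F.val.map g) ≫ F.val.map (homOfLE (minimalOpen_le S hr)).op
      = c.π.app ⟨r, upper S htr t.2⟩ := by
  erw [Category.assoc, ← F.val.map_comp,
    map_eq S F (g ≫ (homOfLE (minimalOpen_le S hr)).op)
      ((homOfLE (fun q hq => le_trans htr hq) : minimalOpen S r ⟶ minimalOpen S t.1)).op]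
  exact cone_w S F U c htr

lemma cone_w_any (U : Opens (alexandrovSpace S))
    (c : Cone (restrictDiagram S (mOp S ⋙ F.val) U)) (a : openSubposet S U)
    {r : S} (har : a.1 ≤ r)
    (g : op (minimalOpen S a.1) ⟶ op (minimalOpen S r)) :
    c.π.app a ≫ F.val.map g = c.π.app ⟨r, upper S har a.2⟩ := by
  erw [map_eq S F g ((homOfLE (fun q hq => le_trans har hq) :
    minimalOpen S r ⟶ minimalOpen S a.1)).op]
  exact cone_w S F U c har

/-- The legs of the pairwise cone built from a cone over the restricted stalk diagram. -/
def pcApp (U : Opens (alexandrovSpace S))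
    (c : Cone (restrictDiagram S (mOp S ⋙ F.val) U)) :
    (j : Pairwise (openSubposet S U)) →
      (c.pt ⟶ F.val.obj (op ((Pairwise.diagram (ptCover S U)).obj j)))
  | .single t => c.π.app t
  | .pair t t' => c.π.app t ≫ F.val.map
      (homOfLE (inf_le_left : ptCover S U t ⊓ ptCover S U t' ≤ ptCover S U t)).op

/-- The pairwise cone built from a cone over the restricted stalk diagram. -/
def pairwiseCone (U : Opens (alexandrovSpace S))
    (c : Cone (restrictDiagram S (mOp S ⋙ F.val) U)) :
    Cone ((Pairwise.diagram (ptCover S U)).op ⋙ F.val) where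
  pt := c.pt
  π :=
    { app := fun j => pcApp S F U c j.unop
      naturality := by
        intro a b f
        obtain ⟨a⟩ := a
        obtain ⟨b⟩ := b
        obtain ⟨g⟩ := f
        change Pairwise.Hom b a at g
        cases g with
        | id_single t =>
          apply sheaf_sep S F (minimalOpen S t.1)
          intro r hr
          simp only [Functor.const_obj_map, Category.id_comp, Category.assoc, Functor.comp_map,
            ← F.val.map_comp, pcApp]
          exact ((congrArg (· ≫ _) (Category.id_comp _)).trans (cone_w_any S F U c t hr _)).trans
            ((Category.assoc _ _ _).trans ((congrArg (_ ≫ ·) (F.val.map_comp _ _).symm).trans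
              (cone_w_any S F U c t hr _))).symm
        | id_pair t t' =>
          apply sheaf_sep S F (ptCover S U t ⊓ ptCover S U t')
          intro r hr
          simp only [Functor.const_obj_map, Category.id_comp, Category.assoc, Functor.comp_map,
            ← F.val.map_comp, pcApp]
          exact ((congrArg (· ≫ _) (Category.id_comp _)).trans ((Category.assoc _ _ _).trans
            ((congrArg (_ ≫ ·) (F.val.map_comp _ _).symm).trans (cone_w_any S F U c t hr.1 _)))).trans
            (by
              erw [Category.assoc, Category.assoc, ← F.val.map_comp, ← F.val.map_comp]
              exact (cone_w_any S F U c t hr.1 _).symm)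
        | left t t' =>
          apply sheaf_sep S F (ptCover S U t ⊓ ptCover S U t')
          intro r hr
          simp only [Functor.const_obj_map, Category.id_comp, Category.assoc, Functor.comp_map,
            ← F.val.map_comp, pcApp]
          exact ((congrArg (· ≫ _) (Category.id_comp _)).trans ((Category.assoc _ _ _).trans
            ((congrArg (_ ≫ ·) (F.val.map_comp _ _).symm).trans (cone_w_any S F U c t hr.1 _)))).trans
            ((Category.assoc _ _ _).trans ((congrArg (_ ≫ ·) (F.val.map_comp _ _).symm).trans
              (cone_w_any S F U c t hr.1 _))).symm
        | right t t' =>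
          apply sheaf_sep S F (ptCover S U t ⊓ ptCover S U t')
          intro r hr
          simp only [Functor.const_obj_map, Category.id_comp, Category.assoc, Functor.comp_map,
            ← F.val.map_comp, pcApp]
          exact ((congrArg (· ≫ _) (Category.id_comp _)).trans ((Category.assoc _ _ _).trans
            ((congrArg (_ ≫ ·) (F.val.map_comp _ _).symm).trans (cone_w_any S F U c t hr.1 _)))).trans
            ((Category.assoc _ _ _).trans ((congrArg (_ ≫ ·) (F.val.map_comp _ _).symm).trans
              (cone_w_any S F U c t' hr.2 _))).symm }

/-- A choice of limit structure witnessing the sheaf condition for the pointwise cover. -/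
noncomputable def hLim (U : Opens (alexandrovSpace S)) :
    IsLimit (F.val.mapCone (Pairwise.cocone (ptCover S U)).op) :=
  ((TopCat.Presheaf.isSheaf_iff_isSheafPairwiseIntersections F.val).mp F.cond
    (ptCover S U)).some

lemma lift_res (U : Opens (alexandrovSpace S))
    (c : Cone (restrictDiagram S (mOp S ⋙ F.val) U)) {r : S} (hrU : r ∈ U)
    (g : op (iSup (ptCover S U)) ⟶ op (minimalOpen S r)) :
    (hLim S F U).lift (pairwiseCone S F U c) ≫ F.val.map g = c.π.app ⟨r, hrU⟩ := by
  erw [map_eq S F g (show op (iSup (ptCover S U)) ⟶ op (minimalOpen S r) from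
    ((Pairwise.cocone (ptCover S U)).ι.app (Pairwise.single ⟨r, hrU⟩)).op)]
  exact (hLim S F U).fac (pairwiseCone S F U c) (op (Pairwise.single ⟨r, hrU⟩))

/-- `F(U)` is the limit of the stalk diagram restricted to `U`. -/
noncomputable def stalkIsLimit (U : Opens (alexandrovSpace S)) :
    IsLimit (stalkCone S F U) where
  lift c := (hLim S F U).lift (pairwiseCone S F U c) ≫
    F.val.map (eqToHom (congrArg op (iSup_ptCover S U)))
  fac c t := by
    show ((hLim S F U).lift (pairwiseCone S F U c) ≫
        F.val.map (eqToHom (congrArg op (iSup_ptCover S U)))) ≫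
        F.val.map (homOfLE (minimalOpen_le S t.2)).op = c.π.app t
    rw [Category.assoc, ← F.val.map_comp]
    exact lift_res S F U c t.2 _
  uniq c m hm := by
    apply sheaf_sep S F U
    intro r hr
    have h1 : m ≫ F.val.map (homOfLE (minimalOpen_le S hr)).op = c.π.app ⟨r, hr⟩ :=
      hm ⟨r, hr⟩
    erw [h1, Category.assoc, ← F.val.map_comp, lift_res S F U c hr]

end Stalks

section Functors

lemma hom_ext' {D : S ⥤ V} {U : Opens (alexandrovSpace S)} {A : V}
    {x y : A ⟶ limit (restrictDiagram S D U)}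
    (h : ∀ (t : S) (ht : t ∈ U), x ≫ proj S D U ht = y ≫ proj S D U ht) : x = y :=
  limit.hom_ext fun t => h t.1 t.2

/-- The component of `Phi.map α` at `U`. -/
noncomputable def phiApp {D D' : S ⥤ V} (α : D ⟶ D') (U : (Opens (alexandrovSpace S))ᵒᵖ) :
    limit (restrictDiagram S D U.unop) ⟶ limit (restrictDiagram S D' U.unop) :=
  limit.lift (restrictDiagram S D' U.unop)
    { pt := limit (restrictDiagram S D U.unop)
      π :=
        { app := fun t => proj S D U.unop t.2 ≫ α.app t.1
          naturality := by
            intro a b g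
            show 𝟙 _ ≫ proj S D U.unop b.2 ≫ α.app b.1
              = (proj S D U.unop a.2 ≫ α.app a.1) ≫ D'.map (homOfLE g.le)
            rw [Category.id_comp, Category.assoc, ← α.naturality (homOfLE g.le),
              ← Category.assoc, proj_w S D U.unop a.2 g.le] } }

lemma phiApp_proj {D D' : S ⥤ V} (α : D ⟶ D') (U : (Opens (alexandrovSpace S))ᵒᵖ)
    {t : S} (ht : t ∈ U.unop) :
    phiApp S α U ≫ proj S D' U.unop ht = proj S D U.unop ht ≫ α.app t :=
  limit.lift_π _ _

/-- The functor from diagrams to sheaves. -/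
noncomputable def Phi : (S ⥤ V) ⥤ TopCat.Sheaf V (alexandrovSpace S) where
  obj D := ⟨limPresheaf S D, limPresheaf_isSheaf S D⟩
  map {D D'} α :=
    ⟨{ app := phiApp S α
       naturality := by
         intro U U' f
         apply hom_ext'
         intro t ht
         erw [Category.assoc, Category.assoc, phiApp_proj S α U' ht,
           limPresheaf_map_proj S D' f ht, ← Category.assoc,
           limPresheaf_map_proj S D f ht, phiApp_proj S α U (f.unop.le ht)]
         rfl }⟩
  map_id D := by
    apply Sheaf.hom_ext
    apply NatTrans.ext
    funext U
    apply hom_ext'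
    intro t ht
    exact ((phiApp_proj S (𝟙 D) U ht).trans (Category.comp_id _)).trans
      (Category.id_comp _).symm
  map_comp {D D' D''} α β := by
    apply Sheaf.hom_ext
    apply NatTrans.ext
    funext U
    apply hom_ext'
    intro t ht
    show phiApp S (α ≫ β) U ≫ proj S D'' U.unop ht
      = (phiApp S α U ≫ phiApp S β U) ≫ proj S D'' U.unop ht
    rw [phiApp_proj S (α ≫ β) U ht, Category.assoc, phiApp_proj S β U ht,
      ← Category.assoc, phiApp_proj S α U ht, Category.assoc]
    rfl

/-- The functor from sheaves to diagrams. -/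
def Psi : TopCat.Sheaf V (alexandrovSpace S) ⥤ S ⥤ V where
  obj F := mOp S ⋙ F.val
  map η := Functor.whiskerLeft (mOp S) η.hom

/-- The cone with apex `D s` over the restriction of `D` to `U_s`. -/
def unitCone (D : S ⥤ V) (s : S) : Cone (restrictDiagram S D (minimalOpen S s)) where
  pt := D.obj s
  π :=
    { app := fun t => D.map (homOfLE t.2)
      naturality := by
        intro a b g
        show 𝟙 (D.obj s) ≫ D.map (homOfLE b.2) = D.map (homOfLE a.2) ≫ D.map (homOfLE g.le)
        rw [Category.id_comp, ← D.map_comp]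
        rfl }

/-- `D s` is the limit of `D` restricted to the minimal open `U_s`. -/
def unitConeIsLimit (D : S ⥤ V) (s : S) : IsLimit (unitCone S D s) where
  lift c := c.π.app ⟨s, le_refl s⟩
  fac c t := c.w (homOfLE t.2 : (⟨s, le_refl s⟩ : openSubposet S (minimalOpen S s)) ⟶ t)
  uniq c m hm := by
    have h : m ≫ D.map (𝟙 s) = c.π.app ⟨s, le_refl s⟩ := hm ⟨s, le_refl s⟩
    rw [D.map_id] at h
    exact (Category.comp_id m).symm.trans h

/-- The component of the unit at `D` and `s`. -/
noncomputable def unitApp (D : S ⥤ V) (s : S) :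
    D.obj s ≅ limit (restrictDiagram S D (minimalOpen S s)) :=
  IsLimit.conePointUniqueUpToIso (unitConeIsLimit S D s)
    (limit.isLimit (restrictDiagram S D (minimalOpen S s)))

lemma unitApp_proj (D : S ⥤ V) (s : S) {t : S} (ht : t ∈ minimalOpen S s) :
    (unitApp S D s).hom ≫ proj S D (minimalOpen S s) ht = D.map (homOfLE ht) :=
  IsLimit.conePointUniqueUpToIso_hom_comp (unitConeIsLimit S D s)
    (limit.isLimit (restrictDiagram S D (minimalOpen S s))) ⟨t, ht⟩

/-- The unit isomorphism of the equivalence. -/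
noncomputable def unitIso : 𝟭 (S ⥤ V) ≅ Phi S ⋙ Psi S :=
  NatIso.ofComponents
    (fun D => NatIso.ofComponents (fun s => unitApp S D s)
      (by
        intro s s' g
        apply hom_ext'
        intro t ht
        show (D.map g ≫ (unitApp S D s').hom) ≫ proj S D (minimalOpen S s') ht
          = ((unitApp S D s).hom ≫ (limPresheaf S D).map
              (show op (minimalOpen S s) ⟶ op (minimalOpen S s') from (mOp S).map g))
            ≫ proj S D (minimalOpen S s') ht
        erw [Category.assoc, unitApp_proj S D s' ht, Category.assoc,
          limPresheaf_map_proj S D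
            (show op (minimalOpen S s) ⟶ op (minimalOpen S s') from (mOp S).map g) ht,
          unitApp_proj S D s ((show op (minimalOpen S s) ⟶ op (minimalOpen S s')
            from (mOp S).map g).unop.le ht), ← D.map_comp]
        rfl))
    (by
      intro D D' α
      apply NatTrans.ext
      funext s
      apply hom_ext'
      intro t ht
      show (α.app s ≫ (unitApp S D' s).hom) ≫ proj S D' (minimalOpen S s) ht
        = ((unitApp S D s).hom ≫ phiApp S α (op (minimalOpen S s)))
          ≫ proj S D' (minimalOpen S s) ht
      rw [Category.assoc, unitApp_proj S D' s ht, Category.assoc,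
        phiApp_proj S α (op (minimalOpen S s)) ht, ← Category.assoc,
        unitApp_proj S D s ht]
      exact (α.naturality (homOfLE ht)).symm)

/-- The component of the counit at a sheaf `F` and open `U`. -/
noncomputable def epsApp (F : TopCat.Sheaf V (alexandrovSpace S))
    (U : (Opens (alexandrovSpace S))ᵒᵖ) :
    limit (restrictDiagram S (mOp S ⋙ F.val) U.unop) ≅ F.val.obj U :=
  IsLimit.conePointUniqueUpToIso
    (limit.isLimit (restrictDiagram S (mOp S ⋙ F.val) U.unop))
    (stalkIsLimit S F U.unop)

lemma epsApp_res (F : TopCat.Sheaf V (alexandrovSpace S))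
    (U : (Opens (alexandrovSpace S))ᵒᵖ) {r : S} (hr : r ∈ U.unop) :
    (epsApp S F U).hom ≫ F.val.map (homOfLE (minimalOpen_le S hr)).op
      = proj S (mOp S ⋙ F.val) U.unop hr :=
  IsLimit.conePointUniqueUpToIso_hom_comp
    (limit.isLimit (restrictDiagram S (mOp S ⋙ F.val) U.unop))
    (stalkIsLimit S F U.unop) ⟨r, hr⟩

/-- The counit isomorphism at the presheaf level. -/
noncomputable def epsNat (F : TopCat.Sheaf V (alexandrovSpace S)) :
    limPresheaf S (mOp S ⋙ F.val) ≅ F.val :=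
  NatIso.ofComponents (epsApp S F)
    (by
      intro U U' f
      apply sheaf_sep S F U'.unop
      intro r hr
      rw [Category.assoc, Category.assoc]
      erw [epsApp_res S F U' hr, ← Category.assoc,
        limPresheaf_map_proj S (mOp S ⋙ F.val) f hr, Category.assoc, ← F.val.map_comp,
        map_eq S F (f ≫ (homOfLE (minimalOpen_le S hr)).op)
          ((homOfLE (minimalOpen_le S (f.unop.le hr))).op),
        epsApp_res S F U (f.unop.le hr)])

/-- The counit isomorphism of the equivalence. -/
noncomputable def counitIso : Psi S ⋙ Phi S ≅ 𝟭 (TopCat.Sheaf V (alexandrovSpace S)) :=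
  NatIso.ofComponents
    (fun F =>
      { hom := ⟨(epsNat S F).hom⟩
        inv := ⟨(epsNat S F).inv⟩
        hom_inv_id := by
          apply Sheaf.hom_ext
          exact (epsNat S F).hom_inv_id
        inv_hom_id := by
          apply Sheaf.hom_ext
          exact (epsNat S F).inv_hom_id })
    (by
      intro F G φ
      apply Sheaf.hom_ext
      apply NatTrans.ext
      funext U
      apply sheaf_sep S G U.unop
      intro r hr
      show ((phiApp S (Functor.whiskerLeft (mOp S) φ.hom) U ≫ (epsApp S G U).hom)
          ≫ G.val.map (homOfLE (minimalOpen_le S hr)).op)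
        = (((epsApp S F U).hom ≫ φ.hom.app U)
          ≫ G.val.map (homOfLE (minimalOpen_le S hr)).op)
      erw [Category.assoc, epsApp_res S G U hr,
        phiApp_proj S (Functor.whiskerLeft (mOp S) φ.hom) U hr, Category.assoc,
        ← φ.hom.naturality (homOfLE (minimalOpen_le S hr)).op, ← Category.assoc,
        epsApp_res S F U hr]
      rfl)

end Functors

end AlexEquivAux

/-- For a finite poset `S` with Alexandrov topology `X_S` and a complete
category `V`, the category of diagrams `S ⥤ V` is equivalent to the category of `V`-valued
sheaves on `X_S`; the equivalence sends a diagram `D` to the sheaf `U ↦ lim (D|_U)` and a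
sheaf `F` to its diagram of stalks `s ↦ F(U_s)`. -/
theorem diagrams_equivalent_sheaves [Fintype S]
    (V : Type u) [Category.{v} V] [HasLimitsOfSize.{0, 0} V] :
    ∃ E : (S ⥤ V) ≌ TopCat.Sheaf V (alexandrovSpace S),
      (∀ (D : S ⥤ V) (U : (Opens (alexandrovSpace S))ᵒᵖ),
        Nonempty ((E.functor.obj D).val.obj U ≅ limit (restrictDiagram S D U.unop))) ∧
      (∀ (F : TopCat.Sheaf V (alexandrovSpace S)) (s : S),
        Nonempty ((E.inverse.obj F).obj s ≅ F.val.obj (op (minimalOpen S s)))) := by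
  refine ⟨CategoryTheory.Equivalence.mk (AlexEquivAux.Phi S) (AlexEquivAux.Psi S)
    (AlexEquivAux.unitIso S) (AlexEquivAux.counitIso S), fun D U => ⟨Iso.refl _⟩,
    fun F s => ⟨Iso.refl _⟩⟩
end

section
/- Let S be a poset, V an abelian category, s ∈ S, and W an injective object of V. Then the cone-shaped sheaf ⟨s⟩W is an injective object of the abelian functor category of diagrams S ⥤ V. -/
open CategoryTheory CategoryTheory.Limits ZeroObject
open scoped Classical

universe u v

variable {S : Type} [PartialOrder S] {V : Type u} [Category.{v} V] [Abelian V]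

/-- The cone-shaped sheaf `⟨s⟩W` on a poset `S`: its value at `t` is `W` if `t ≤ s` and `0`
otherwise; the structure map for `t ≤ t' ≤ s` is the identity of `W`, and all other structure
maps are zero. -/
noncomputable def coneSheaf (s : S) (W : V) : S ⥤ V where
  obj t := if t ≤ s then W else 0
  map {t t'} f :=
    if h' : t' ≤ s then
      eqToHom (by (try dsimp only); rw [if_pos (le_trans (leOfHom f) h'), if_pos h'])
    else 0
  map_id t := by
    by_cases h : t ≤ s
    · try dsimp only
      rw [dif_pos h]
      simp
    · exact ((isZero_zero V).of_iso (eqToIso (if_neg h))).eq_of_src _ _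
  map_comp {t t' t''} f g := by
    by_cases h'' : t'' ≤ s
    · have h' : t' ≤ s := le_trans (leOfHom g) h''
      try dsimp only
      rw [dif_pos h'', dif_pos h'', dif_pos h', eqToHom_trans]
    · exact ((isZero_zero V).of_iso (eqToIso (if_neg h''))).eq_of_tgt _ _

lemma coneSheaf_isZero (s : S) (W : V) {t : S} (h : ¬ t ≤ s) :
    IsZero ((coneSheaf s W).obj t) :=
  (isZero_zero V).of_iso (eqToIso (if_neg h))

noncomputable def coneSheafFunctor (s : S) : V ⥤ (S ⥤ V) where
  obj W := coneSheaf s W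
  map {W W'} f :=
    { app := fun t =>
        if h : t ≤ s then eqToHom (if_pos h) ≫ f ≫ eqToHom (if_pos h).symm else 0
      naturality := by
        intro t t' g
        by_cases h' : t' ≤ s
        · have h : t ≤ s := le_trans (leOfHom g) h'
          rw [dif_pos h', dif_pos h]
          simp only [coneSheaf, dif_pos h, dif_pos h']
          simp
        · exact (coneSheaf_isZero s W' h').eq_of_tgt _ _ }
  map_id W := by
    ext t
    by_cases h : t ≤ s
    · simp [dif_pos h]
      exact (eqToHom_trans _ _).trans (eqToHom_refl _ _)
    · exact (coneSheaf_isZero s W h).eq_of_tgt _ _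
  map_comp {W W' W''} f g := by
    ext t
    by_cases h : t ≤ s
    · simp [dif_pos h]
      erw [eqToHom_trans_assoc, eqToHom_refl, Category.id_comp]
    · exact (coneSheaf_isZero s W'' h).eq_of_tgt _ _

noncomputable def coneSheafAdjunction (s : S) :
    (evaluation S V).obj s ⊣ coneSheafFunctor s :=
  Adjunction.mkOfHomEquiv
    { homEquiv := fun F W =>
        { toFun := fun g =>
            { app := fun t =>
                if h : t ≤ s then F.map (homOfLE h) ≫ g ≫ eqToHom (if_pos h).symm
                else 0
              naturality := by
                intro t t' f
                by_cases h' : t' ≤ s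
                · have h : t ≤ s := le_trans (leOfHom f) h'
                  rw [dif_pos h', dif_pos h]
                  simp only [coneSheafFunctor, coneSheaf, dif_pos h, dif_pos h']
                  simp only [eqToHom_trans, Category.assoc]
                  rw [← Category.assoc, ← F.map_comp]
                  rw [show f ≫ homOfLE h' = homOfLE h from rfl]
                · exact (coneSheaf_isZero s W h').eq_of_tgt _ _ }
          invFun := fun η => η.app s ≫ eqToHom (if_pos le_rfl)
          left_inv := by
            intro g
            simp
            erw [eqToHom_trans, eqToHom_refl, Category.comp_id]
          right_inv := by
            intro η
            ext t
            by_cases h : t ≤ s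
            · have := η.naturality (homOfLE h)
              simp only [coneSheafFunctor, coneSheaf, dif_pos (le_refl s)] at this
              dsimp only
              rw [dif_pos h]
              simp [coneSheafFunctor, coneSheaf, dif_pos h, ← this]
              rw [← Category.assoc, this]
              erw [Category.assoc, eqToHom_trans, eqToHom_refl, Category.comp_id]
            · exact (coneSheaf_isZero s _ h).eq_of_tgt _ _ }
      homEquiv_naturality_left_symm := by
        intro F F' W f g
        simp
      homEquiv_naturality_right := by
        intro F W W' g f
        ext t
        by_cases h : t ≤ s
        · simp only [Equiv.coe_fn_mk, NatTrans.comp_app]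
          rw [dif_pos h, dif_pos h]
          simp [coneSheafFunctor, dif_pos h]
          erw [eqToHom_trans_assoc, eqToHom_refl, Category.id_comp]
        · exact (coneSheaf_isZero s W' h).eq_of_tgt _ _ }

/-- If `W` is an injective object of the abelian category `V`, then the
cone-shaped sheaf `⟨s⟩W` is an injective object of the category of diagrams `S ⥤ V`. -/
theorem coneSheaf_injective (s : S) (W : V) [Injective W] :
    Injective (coneSheaf s W) :=
  (coneSheafAdjunction s).map_injective W inferInstance
end

section
/- Let X and Y be sober topological spaces. If there is an equivalence of categories between the category of Type-valued (set-valued) sheaves on X and the category of Type-valued sheaves on Y, then X and Y are homeomorphic. -/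
open CategoryTheory TopologicalSpace Opposite


section Sober

variable {X : Type*} [TopologicalSpace X]

/-- The complement of the closure of a point, as an open set. -/
def genOpen (x : X) : Opens X := ⟨(closure {x})ᶜ, isClosed_closure.isOpen_compl⟩

theorem le_genOpen_iff {V : Opens X} {x : X} : V ≤ genOpen x ↔ x ∉ V := by
  constructor
  · intro h hx
    exact h hx (subset_closure rfl)
  · intro hx y hy
    have hsub : closure ({x} : Set X) ⊆ (↑V : Set X)ᶜ :=
      closure_minimal (Set.singleton_subset_iff.mpr hx) V.isOpen.isClosed_compl
    show y ∉ closure ({x} : Set X)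
    exact fun hyc => hsub hyc hy

/-- A prime open set. -/
def OpensIsPrime (U : Opens X) : Prop :=
  U ≠ ⊤ ∧ ∀ V W : Opens X, V ⊓ W ≤ U → V ≤ U ∨ W ≤ U

theorem genOpen_isPrime (x : X) : OpensIsPrime (genOpen x) := by
  constructor
  · intro h
    have : x ∈ genOpen x := h ▸ trivial
    exact this (subset_closure rfl)
  · intro V W h
    rw [le_genOpen_iff] at h ⊢
    rw [le_genOpen_iff (V := W)]
    by_contra hc
    push_neg at hc
    exact h ⟨hc.1, hc.2⟩

theorem genOpen_injective [T0Space X] : Function.Injective (genOpen (X := X)) := by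
  intro x y h
  have : closure ({x} : Set X) = closure {y} := by
    have := congrArg (fun U : Opens X => (U : Set X)ᶜ) h
    simpa [genOpen] using this
  exact (inseparable_iff_closure_eq.mpr this).eq

theorem exists_genOpen [QuasiSober X] {U : Opens X} (hU : OpensIsPrime U) : ∃ x, genOpen x = U := by
  have hcl : IsClosed ((U : Set X)ᶜ) := U.2.isClosed_compl
  have hne : ((U : Set X)ᶜ).Nonempty := by
    by_contra h
    rw [Set.not_nonempty_iff_eq_empty, Set.compl_empty_iff] at h
    exact hU.1 (Opens.ext (by simp [h]))
  have hirr : IsIrreducible ((U : Set X)ᶜ) := by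
    refine ⟨hne, fun u v hu hv ⟨a, hau, ha⟩ ⟨b, hbv, hb⟩ => ?_⟩
    by_contra h
    rw [Set.not_nonempty_iff_eq_empty] at h
    have hsub : (⟨u, hu⟩ ⊓ ⟨v, hv⟩ : Opens X) ≤ U := by
      intro z hz
      by_contra hzU
      exact Set.eq_empty_iff_forall_notMem.mp h z ⟨hzU, hz⟩
    rcases hU.2 _ _ hsub with h' | h'
    · exact hau (h' ha)
    · exact hbv (h' hb)
  obtain ⟨x, hx⟩ := QuasiSober.sober hirr hcl
  exact ⟨x, by ext1; show (closure {x})ᶜ = (U : Set X); rw [hx, compl_compl]⟩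

end Sober

theorem homeomorph_of_opens_orderIso
    {X Y : Type*} [TopologicalSpace X] [TopologicalSpace Y]
    [QuasiSober X] [T0Space X] [QuasiSober Y] [T0Space Y]
    (f : Opens X ≃o Opens Y) : Nonempty (X ≃ₜ Y) := by
  have primeMap : ∀ (U : Opens X), OpensIsPrime U → OpensIsPrime (f U) := by
    intro U hU
    constructor
    · intro h
      apply hU.1
      have := congrArg f.symm h
      simpa using this
    · intro V W h
      have : f.symm V ⊓ f.symm W ≤ U := by
        have := f.symm.monotone h
        simpa [map_inf] using this
      rcases hU.2 _ _ this with h' | h'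
      · left; simpa using f.monotone h'
      · right; simpa using f.monotone h'
  have primeMap' : ∀ (U : Opens Y), OpensIsPrime U → OpensIsPrime (f.symm U) := by
    intro U hU
    constructor
    · intro h
      apply hU.1
      have := congrArg f h
      simpa using this
    · intro V W h
      have : f V ⊓ f W ≤ U := by
        have := f.monotone h
        simpa [map_inf] using this
      rcases hU.2 _ _ this with h' | h'
      · left; simpa using f.symm.monotone h'
      · right; simpa using f.symm.monotone h'
  choose g hg using fun x : X => exists_genOpen (primeMap _ (genOpen_isPrime x))
  choose g' hg' using fun y : Y => exists_genOpen (primeMap' _ (genOpen_isPrime y))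
  have li : Function.LeftInverse g' g := by
    intro x
    apply genOpen_injective
    rw [hg', hg]
    simp
  have ri : Function.RightInverse g' g := by
    intro y
    apply genOpen_injective
    rw [hg, hg']
    simp
  have hpre : ∀ V : Opens Y, g ⁻¹' (V : Set Y) = ((f.symm V : Opens X) : Set X) := by
    intro V
    ext x
    have h1 : g x ∈ V ↔ ¬ (V ≤ genOpen (g x)) := by
      rw [le_genOpen_iff, not_not]
    have h2 : (x ∈ (f.symm V : Opens X)) ↔ ¬ ((f.symm V : Opens X) ≤ genOpen x) := by
      rw [le_genOpen_iff, not_not]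
    simp only [Set.mem_preimage, SetLike.mem_coe]
    rw [h1, h2, hg, f.symm_apply_le]
  have hpre' : ∀ V : Opens X, g' ⁻¹' (V : Set X) = ((f V : Opens Y) : Set Y) := by
    intro V
    ext y
    have h1 : g' y ∈ V ↔ ¬ (V ≤ genOpen (g' y)) := by
      rw [le_genOpen_iff, not_not]
    have h2 : (y ∈ (f V : Opens Y)) ↔ ¬ ((f V : Opens Y) ≤ genOpen y) := by
      rw [le_genOpen_iff, not_not]
    simp only [Set.mem_preimage, SetLike.mem_coe]
    rw [h1, h2, hg', f.le_symm_apply]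
  refine ⟨⟨⟨g, g', li, ri⟩, ?_, ?_⟩⟩
  · rw [continuous_def]
    intro s hs
    have := hpre ⟨s, hs⟩
    simp only [Opens.coe_mk] at this
    rw [this]
    exact (f.symm ⟨s, hs⟩).isOpen
  · rw [continuous_def]
    intro s hs
    have := hpre' ⟨s, hs⟩
    simp only [Opens.coe_mk] at this
    rw [this]
    exact (f ⟨s, hs⟩).isOpen


namespace SheafOpens

variable {X : TopCat.{0}}

/-- The characteristic sheaf of an open set. -/
def chi (U : Opens X) : TopCat.Sheaf (Type) X := by
  refine ⟨{ obj := fun V => PLift (V.unop ≤ U)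
            map := fun f => TypeCat.ofHom fun h => ⟨f.unop.le.trans h.down⟩ }, ?_⟩
  apply (TopCat.Presheaf.isSheaf_iff_isSheafUniqueGluing_types _).mpr
  intro ι V sf _
  refine ⟨⟨iSup_le fun i => (sf i).down⟩, fun i => ?_, fun s _ => ?_⟩
  · exact Subsingleton.elim (α := PLift _) _ _
  · exact Subsingleton.elim (α := PLift _) _ _

/-- "Subterminal": all values are subsingletons. -/
def ST (F : TopCat.Sheaf (Type) X) : Prop := ∀ V : (Opens X)ᵒᵖ, Subsingleton (F.val.obj V)

theorem ST_chi (U : Opens X) : ST (chi U) := fun _ => ⟨fun a b => by change PLift _ at a b; cases a; cases b; rfl⟩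

/-- The support of a sheaf. -/
def supp (F : TopCat.Sheaf (Type) X) : Opens X := sSup {U | Nonempty (F.val.obj (op U))}

theorem le_supp_of_nonempty {F : TopCat.Sheaf (Type) X} {V : Opens X}
    (h : Nonempty (F.val.obj (op V))) : V ≤ supp F := le_sSup h

theorem supp_chi (U : Opens X) : supp (chi U) = U := by
  apply le_antisymm
  · exact sSup_le fun V hV => (hV.some : PLift (V ≤ U)).down
  · exact le_sSup (show Nonempty (PLift (U ≤ U)) from ⟨⟨le_rfl⟩⟩)

theorem nonempty_of_le_supp {F : TopCat.Sheaf (Type) X} (hF : ST F) {V : Opens X}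
    (h : V ≤ supp F) : Nonempty (F.val.obj (op V)) := by
  set S := {U : Opens X | Nonempty (F.val.obj (op U))} with hS
  let ι := {U : Opens X // Nonempty (F.val.obj (op U))}
  let W : ι → Opens X := fun i => V ⊓ i.1
  have hcov : V = iSup W := by
    apply le_antisymm
    · intro x hx
      obtain ⟨U, hU, hxU⟩ := Opens.mem_sSup.mp (h hx)
      exact Opens.mem_iSup.mpr ⟨⟨U, hU⟩, ⟨hx, hxU⟩⟩
    · exact iSup_le fun i => inf_le_left
  let sf : ∀ i : ι, F.val.obj (op (W i)) := fun i =>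
    F.val.map (homOfLE (inf_le_right : W i ≤ i.1)).op i.2.some
  have hcompat : TopCat.Presheaf.IsCompatible F.val W sf := by
    intro i j
    exact @Subsingleton.elim _ (hF _) _ _
  obtain ⟨s, -, -⟩ := (TopCat.Presheaf.isSheaf_iff_isSheafUniqueGluing_types _).mp F.cond W sf hcompat
  rw [hcov]
  exact ⟨s⟩

theorem supp_le_of_hom {F G : TopCat.Sheaf (Type) X} (φ : F ⟶ G) : supp F ≤ supp G :=
  sSup_le fun _ hU => le_sSup ⟨φ.hom.app _ hU.some⟩

/-- Construct a morphism of subterminal sheaves from support inclusion. -/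
noncomputable def homOfSuppLe {F G : TopCat.Sheaf (Type) X} (hF : ST F) (hG : ST G)
    (h : supp F ≤ supp G) : F ⟶ G := by
  refine ⟨{ app := fun V => TypeCat.ofHom fun s =>
      (nonempty_of_le_supp hG ((le_supp_of_nonempty ⟨s⟩).trans h)).some, naturality := ?_ }⟩
  intro V W f
  ext s
  exact @Subsingleton.elim _ (hG _) _ _

/-- ST is invariant under isomorphism. -/
theorem ST_of_iso {F G : TopCat.Sheaf (Type) X} (i : F ≅ G) (hF : ST F) : ST G := by
  intro V
  refine ⟨fun a b => ?_⟩
  have h : ∀ c : G.val.obj V, i.hom.hom.app V (i.inv.hom.app V c) = c := by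
    intro c
    have h1 : (i.inv ≫ i.hom).hom.app V c = c := by rw [i.inv_hom_id]; rfl
    exact h1
  rw [← h a, ← h b]
  exact congrArg _ (@Subsingleton.elim _ (hF V) _ _)

/-- morphism from chi U determined by a section over U. -/
def chiHom {F : TopCat.Sheaf (Type) X} {U : Opens X} (s : F.val.obj (op U)) : chi U ⟶ F := by
  refine ⟨{ app := fun V => TypeCat.ofHom fun (h : PLift (V.unop ≤ U)) => F.val.map (homOfLE h.down).op s, naturality := ?_ }⟩
  intro V W f
  ext h
  show F.val.map _ s = F.val.map f (F.val.map _ s)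
  rw [← FunctorToTypes.map_comp_apply]
  congr 1

theorem ST_iff (F : TopCat.Sheaf (Type) X) : ST F ↔ ∀ G, Subsingleton (G ⟶ F) := by
  constructor
  · intro hF G
    refine ⟨fun α β => ?_⟩
    apply InducedCategory.hom_ext
    apply NatTrans.ext
    funext V; ext s
    exact @Subsingleton.elim _ (hF V) _ _
  · intro h V
    refine ⟨fun a b => ?_⟩
    have hsub := h (chi V.unop)
    have := congrArg (fun φ : chi V.unop ⟶ F => φ.hom.app (op V.unop) (show PLift (V.unop ≤ V.unop) from ⟨le_rfl⟩))
      (@Subsingleton.elim _ hsub (chiHom a) (chiHom b))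
    simp only [chiHom] at this
    have ha : F.val.map (homOfLE (le_refl V.unop)).op a = a := by
      have : (homOfLE (le_refl V.unop)).op = 𝟙 (op V.unop) := rfl
      rw [this, FunctorToTypes.map_id_apply]
    have hb : F.val.map (homOfLE (le_refl V.unop)).op b = b := by
      have : (homOfLE (le_refl V.unop)).op = 𝟙 (op V.unop) := rfl
      rw [this, FunctorToTypes.map_id_apply]
    rw [← ha, ← hb]
    exact this

variable {Y : TopCat.{0}}

theorem ST_map (e : TopCat.Sheaf (Type) X ≌ TopCat.Sheaf (Type) Y)
    {F : TopCat.Sheaf (Type) X} (hF : ST F) : ST (e.functor.obj F) := by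
  rw [ST_iff] at hF ⊢
  intro G
  have h1 : Subsingleton (e.inverse.obj G ⟶ F) := hF _
  have equiv1 : (e.inverse.obj G ⟶ F) ≃ (e.functor.obj (e.inverse.obj G) ⟶ e.functor.obj F) :=
    e.fullyFaithfulFunctor.homEquiv
  have equiv2 : (e.functor.obj (e.inverse.obj G) ⟶ e.functor.obj F) ≃ (G ⟶ e.functor.obj F) :=
    (e.counitIso.app G).homCongr (Iso.refl _)
  exact Equiv.subsingleton.symm (equiv1.trans equiv2)

/-- The order isomorphism of opens induced by a sheaf equivalence. -/
noncomputable def opensIso (e : TopCat.Sheaf (Type) X ≌ TopCat.Sheaf (Type) Y) :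
    Opens X ≃o Opens Y := by
  let φ : Opens X → Opens Y := fun U => supp (e.functor.obj (chi U))
  let ψ : Opens Y → Opens X := fun U => supp (e.inverse.obj (chi U))
  have hSTφ : ∀ U, ST (e.functor.obj (chi U)) := fun U => ST_map e (ST_chi U)
  have hSTψ : ∀ U, ST (e.inverse.obj (chi U)) := fun U => ST_map e.symm (ST_chi U)
  have mono_φ : ∀ {U U' : Opens X}, U ≤ U' → φ U ≤ φ U' := by
    intro U U' h
    exact supp_le_of_hom (e.functor.map (homOfSuppLe (ST_chi U) (ST_chi U')
      (by rw [supp_chi, supp_chi]; exact h)))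
  have mono_ψ : ∀ {U U' : Opens Y}, U ≤ U' → ψ U ≤ ψ U' := by
    intro U U' h
    exact supp_le_of_hom (e.inverse.map (homOfSuppLe (ST_chi U) (ST_chi U')
      (by rw [supp_chi, supp_chi]; exact h)))
  have supp_eq_of_iso : ∀ {F G : TopCat.Sheaf (Type) X}, (F ≅ G) → supp F = supp G := by
    intro F G i
    exact le_antisymm (supp_le_of_hom i.hom) (supp_le_of_hom i.inv)
  have supp_eq_of_iso' : ∀ {F G : TopCat.Sheaf (Type) Y}, (F ≅ G) → supp F = supp G := by
    intro F G i
    exact le_antisymm (supp_le_of_hom i.hom) (supp_le_of_hom i.inv)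
  -- key: ψ (φ U) = U
  have left : ∀ U : Opens X, ψ (φ U) = U := by
    intro U
    have h1 : Nonempty (chi (φ U) ⟶ e.functor.obj (chi U)) :=
      ⟨homOfSuppLe (ST_chi _) (hSTφ U) (by rw [supp_chi])⟩
    have h2 : Nonempty (e.functor.obj (chi U) ⟶ chi (φ U)) :=
      ⟨homOfSuppLe (hSTφ U) (ST_chi _) (by rw [supp_chi])⟩
    have e1 : supp (e.inverse.obj (chi (φ U))) = supp (e.inverse.obj (e.functor.obj (chi U))) :=
      le_antisymm (supp_le_of_hom (e.inverse.map h1.some)) (supp_le_of_hom (e.inverse.map h2.some))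
    have e2 : supp (e.inverse.obj (e.functor.obj (chi U))) = supp (chi U) :=
      supp_eq_of_iso (e.unitIso.app (chi U)).symm
    show supp (e.inverse.obj (chi (φ U))) = U
    rw [e1, e2, supp_chi]
  have right : ∀ U : Opens Y, φ (ψ U) = U := by
    intro U
    have h1 : Nonempty (chi (ψ U) ⟶ e.inverse.obj (chi U)) :=
      ⟨homOfSuppLe (ST_chi _) (hSTψ U) (by rw [supp_chi])⟩
    have h2 : Nonempty (e.inverse.obj (chi U) ⟶ chi (ψ U)) :=
      ⟨homOfSuppLe (hSTψ U) (ST_chi _) (by rw [supp_chi])⟩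
    have e1 : supp (e.functor.obj (chi (ψ U))) = supp (e.functor.obj (e.inverse.obj (chi U))) :=
      le_antisymm (supp_le_of_hom (e.functor.map h1.some)) (supp_le_of_hom (e.functor.map h2.some))
    have e2 : supp (e.functor.obj (e.inverse.obj (chi U))) = supp (chi U) :=
      supp_eq_of_iso' (e.counitIso.app (chi U))
    show supp (e.functor.obj (chi (ψ U))) = U
    rw [e1, e2, supp_chi]
  refine ⟨⟨φ, ψ, left, right⟩, ?_⟩
  intro U U'
  show φ U ≤ φ U' ↔ U ≤ U'
  constructor
  · intro h
    have := mono_ψ h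
    rwa [left, left] at this
  · exact mono_φ

end SheafOpens

/-- STATEMENT 18: If `X` and `Y` are sober topological spaces whose categories of
type-valued sheaves are equivalent, then `X` and `Y` are homeomorphic. -/
theorem homeomorph_of_sheaf_equivalence
    (X Y : Type) [TopologicalSpace X] [TopologicalSpace Y]
    [QuasiSober X] [T0Space X] [QuasiSober Y] [T0Space Y]
    (e : TopCat.Sheaf (Type) (TopCat.of X) ≌ TopCat.Sheaf (Type) (TopCat.of Y)) :
    Nonempty (X ≃ₜ Y) := by
  exact homeomorph_of_opens_orderIso (X := X) (Y := Y) (SheafOpens.opensIso e)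
end
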